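/- If S ⊆ ℤ \ {0} is nonempty, then γ̄(ℤ, S) ≤ 1/2. -/

import Mathlib

set_option maxHeartbeats 1000000

open Filter

open scoped Classical in
noncomputable def lowerDensity (U : Set ℤ) : ℝ :=
  Filter.liminf (fun n : ℕ =>
    (((Finset.Icc (-(n:ℤ)) (n:ℤ)).filter (fun m => m ∈ U)).card : ℝ) / (2*(n:ℝ)+1))
    Filter.atTop

/-- `D` is a dominating set of the Cayley digraph `Γ(ℤ, S)`. -/
def IsDominating (S D : Set ℤ) : Prop :=
  ∀ v : ℤ, v ∈ D ∨ ∃ u ∈ D, ∃ s ∈ S, v = u + s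

/-- The domination ratio of `Γ(ℤ, S)`. -/
noncomputable def domRatio (S : Set ℤ) : ℝ :=
  sInf {x : ℝ | ∃ D : Set ℤ, IsDominating S D ∧ x = lowerDensity D}

open scoped Classical in
lemma card_bound (s : ℤ) (hs0 : s ≠ 0) (n : ℕ) :
    ((Finset.Icc (-(n:ℤ)) (n:ℤ)).filter (fun m => m ∈ {m : ℤ | Even (m / s)})).card
      ≤ n + s.natAbs := by
  set t : ℕ := s.natAbs with ht
  set N : ℤ := (n : ℤ) + t with hN
  set A := (Finset.Icc (-(n:ℤ)) (n:ℤ)).filter (fun m => m ∈ {m : ℤ | Even (m / s)}) with hA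
  set A' := (Finset.Icc (-N) N).filter (fun m => m ∈ {m : ℤ | Even (m / s)}) with hA'
  set B := (Finset.Icc (-N) N).filter (fun m => ¬ (m ∈ {m : ℤ | Even (m / s)})) with hB
  have habs : |s| = (t : ℤ) := Int.abs_eq_natAbs s
  have hsub : A ⊆ A' := by
    apply Finset.filter_subset_filter
    apply Finset.Icc_subset_Icc <;> simp [hN]
  have hAB : A.card ≤ B.card := by
    apply Finset.card_le_card_of_injOn (fun m => m + s)
    · intro m hm
      simp only [Finset.mem_coe, hA, Finset.mem_filter, Finset.mem_Icc, Set.mem_setOf_eq] at hm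
      simp only [Finset.mem_coe, hB, Finset.mem_filter, Finset.mem_Icc, Set.mem_setOf_eq]
      have h1 : -(t:ℤ) ≤ s := by rw [← habs]; exact neg_abs_le s
      have h2 : s ≤ (t:ℤ) := by rw [← habs]; exact le_abs_self s
      refine ⟨⟨by omega, by omega⟩, ?_⟩
      have : (m + s) / s = m / s + 1 := by
        have := Int.add_mul_ediv_right m 1 hs0
        simpa using this
      rw [this, Int.even_add_one]
      simpa using hm.2
    · intro a _ b _ h
      simpa using h
  have hcard : A'.card + B.card = (Finset.Icc (-N) N).card := by
    exact Finset.card_filter_add_card_filter_not _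
  have hIcc : (Finset.Icc (-N) N).card = 2 * (n + t) + 1 := by
    rw [Int.card_Icc]; simp [hN]; omega
  have h2c : 2 * A.card ≤ 2 * (n + t) + 1 := by
    calc 2 * A.card = A.card + A.card := by ring
    _ ≤ A'.card + B.card := Nat.add_le_add (Finset.card_le_card hsub) hAB
    _ = 2 * (n + t) + 1 := by rw [hcard, hIcc]
  omega

theorem stmt_12 (S : Set ℤ) (hS : 0 ∉ S) (hne : S.Nonempty) :
    domRatio S ≤ 1/2 := by
  classical
  obtain ⟨s, hs⟩ := hne
  have hs0 : s ≠ 0 := fun h => hS (h ▸ hs)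
  set D : Set ℤ := {m : ℤ | Even (m / s)} with hD
  have hdom : IsDominating S D := by
    intro v
    by_cases h : Even (v / s)
    · exact Or.inl h
    · refine Or.inr ⟨v - s, ?_, s, hs, by ring⟩
      show Even ((v - s) / s)
      have : (v - s) / s = v / s - 1 := by
        have := Int.add_mul_ediv_right v (-1) hs0
        simpa [sub_eq_add_neg, neg_mul] using this
      rw [this, Int.even_sub_one]
      exact h
  set t : ℕ := s.natAbs with ht
  -- the comparison sequence
  set g : ℕ → ℝ := fun n => 1/2 + ((t:ℝ) - 1/2) / (2*(n:ℝ)+1) with hg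
  have hgt : Tendsto g atTop (nhds (1/2)) := by
    have hden : Tendsto (fun n : ℕ => 2*(n:ℝ)+1) atTop atTop :=
      Filter.tendsto_atTop_add_const_right _ 1
        (Filter.Tendsto.const_mul_atTop (by norm_num) tendsto_natCast_atTop_atTop)
    have : Tendsto (fun n : ℕ => ((t:ℝ) - 1/2) / (2*(n:ℝ)+1)) atTop (nhds 0) :=
      Filter.Tendsto.div_atTop tendsto_const_nhds hden
    have h0 : (1/2:ℝ) = 1/2 + 0 := by ring
    rw [h0]
    exact Tendsto.add tendsto_const_nhds this
  have hle : lowerDensity D ≤ 1/2 := by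
    have hfg : ∀ n : ℕ,
        (((Finset.Icc (-(n:ℤ)) (n:ℤ)).filter (fun m => m ∈ D)).card : ℝ) / (2*(n:ℝ)+1)
          ≤ g n := by
      intro n
      have hc := card_bound s hs0 n
      have hpos : (0:ℝ) < 2*(n:ℝ)+1 := by positivity
      have hnum : (((Finset.Icc (-(n:ℤ)) (n:ℤ)).filter (fun m => m ∈ D)).card : ℝ)
          ≤ (n:ℝ) + t := by
        have : (((Finset.Icc (-(n:ℤ)) (n:ℤ)).filter (fun m => m ∈ D)).card : ℝ)
            ≤ ((n + t : ℕ) : ℝ) := by exact_mod_cast hc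
        push_cast at this
        linarith
      have hg' : g n = ((n:ℝ) + t) / (2*(n:ℝ)+1) := by
        rw [hg]; field_simp; ring
      rw [hg']
      exact div_le_div_of_nonneg_right hnum hpos.le
    have h1 : lowerDensity D ≤ Filter.liminf g atTop := by
      unfold lowerDensity
      refine Filter.liminf_le_liminf (Filter.Eventually.of_forall fun n => ?_)
        (Filter.isBoundedUnder_of ⟨0, fun n => by positivity⟩) hgt.isCoboundedUnder_ge
      have h := hfg n
      refine le_trans (le_of_eq ?_) h
      congr! 
    rw [hgt.liminf_eq] at h1
    exact h1
  have hmem : lowerDensity D ∈ {x : ℝ | ∃ D : Set ℤ, IsDominating S D ∧ x = lowerDensity D} :=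
    ⟨D, hdom, rfl⟩
  unfold domRatio
  by_cases hbdd : BddBelow {x : ℝ | ∃ D : Set ℤ, IsDominating S D ∧ x = lowerDensity D}
  · exact le_trans (csInf_le hbdd hmem) hle
  · rw [Real.sInf_of_not_bddBelow hbdd]; norm_num
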